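/- For every φ ∈ P one has Y²(W^Sφ) = 0, and consequently q^{20}(W^Sφ) = 0; i.e., the spinor-valued 2-form W^Sφ built from a symplectic Weyl-type tensor lies in the summand E^{21} ⊕ E^{22}. -/

import Mathlib

noncomputable section

open Finset MvPolynomial

/-- The space of symplectic spinors: complex polynomials in `l` variables. -/
abbrev Pol (l : ℕ) := MvPolynomial (Fin l) ℂ

/-- Components `ω_{ij}` of the standard symplectic form on `ℝ^{2l}`. -/
def om (l : ℕ) (i j : Fin (2*l)) : ℝ :=
  if (j : ℕ) = (i : ℕ) + l then 1 else if (i : ℕ) = (j : ℕ) + l then -1 else 0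

/-- Components `ω^{ij}`, defined by `Σ_k ω_{ik} ω^{jk} = δ_i^j`. -/
def omUp (l : ℕ) (i j : Fin (2*l)) : ℝ :=
  if (j : ℕ) = (i : ℕ) + l then 1 else if (i : ℕ) = (j : ℕ) + l then -1 else 0

/-- Symplectic Clifford multiplication by a basis vector `e_i`. -/
def cliff (l : ℕ) (i : Fin (2*l)) (f : Pol l) : Pol l :=
  if h : (i : ℕ) < l then Complex.I • (MvPolynomial.X (⟨(i : ℕ), h⟩ : Fin l) * f)
  else MvPolynomial.pderiv (⟨(i : ℕ) - l, by have := i.isLt; omega⟩ : Fin l) f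

/-- Symplectic Clifford multiplication by an arbitrary vector, extended ℝ-bilinearly. -/
def cliffV (l : ℕ) (v : Fin (2*l) → ℝ) (f : Pol l) : Pol l :=
  ∑ i, ((v i : ℝ) : ℂ) • cliff l i f

/-- Symplectic-spinor-valued `r`-forms (as functions of their `r` vector arguments). -/
abbrev Form (l r : ℕ) := (Fin r → (Fin (2*l) → ℝ)) → Pol l

/-- The standard basis vector `e_i` of `ℝ^{2l}`. -/
def basisVec (l : ℕ) (i : Fin (2*l)) : Fin (2*l) → ℝ := Pi.single i 1

/-- The operator `X`: `(Xφ)(v_1,…,v_{r+1}) = −Σ_a (−1)^{a+1} v_a · φ(v_1,…,v̂_a,…,v_{r+1})`. -/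
def Xop (l r : ℕ) (φ : Form l r) : Form l (r+1) :=
  fun v => -∑ a : Fin (r+1), ((-1 : ℂ)^(a : ℕ)) • cliffV l (v a) (φ (fun b => v (a.succAbove b)))

/-- The operator `Y`: `(Yφ)(v_1,…,v_r) = Σ_{i,j} ω^{ij} e_j · φ(e_i, v_1,…,v_r)`. -/
def Yop (l r : ℕ) (φ : Form l (r+1)) : Form l r :=
  fun v => ∑ i, ∑ j, ((omUp l i j : ℝ) : ℂ) • cliff l j (φ (Fin.cons (basisVec l i) v))

/-- The operator `H = XY + YX` (on 0-forms `Y` vanishes, so there `H = YX`). -/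
def Hop (l : ℕ) : {r : ℕ} → Form l r → Form l r
  | 0, φ => Yop l 0 (Xop l 0 φ)
  | (r+1), φ => Xop l r (Yop l r φ) + Yop l (r+1) (Xop l (r+1) φ)

/-- `X²Y²` on spinor-valued 2-forms. -/
def XXYY (l : ℕ) (φ : Form l 2) : Form l 2 := Xop l 1 (Xop l 0 (Yop l 0 (Yop l 1 φ)))

/-- `XY` on spinor-valued 2-forms. -/
def XY2 (l : ℕ) (φ : Form l 2) : Form l 2 := Xop l 1 (Yop l 1 φ)

/-- The projection `q^{20} = (1/l) X²Y²`. -/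
def q20 (l : ℕ) (φ : Form l 2) : Form l 2 := ((l : ℂ))⁻¹ • XXYY l φ

/-- The projection `q^{21} = (𝕚/(1−l)) (XY − (𝕚/l) X²Y²)`. -/
def q21 (l : ℕ) (φ : Form l 2) : Form l 2 :=
  (Complex.I / (1 - (l : ℂ))) • (XY2 l φ - (Complex.I / (l : ℂ)) • XXYY l φ)

/-- The projection `q^{22} = Id − q^{20} − q^{21}`. -/
def q22 (l : ℕ) (φ : Form l 2) : Form l 2 := φ - q20 l φ - q21 l φ

/-- The spinor-valued 2-form `c · ε^k ∧ ε^m ⊗ s`. -/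
def w2 (l : ℕ) (c : ℝ) (k m : Fin (2*l)) (s : Pol l) : Form l 2 :=
  fun v => ((c * (v 0 k * v 1 m - v 0 m * v 1 k) : ℝ) : ℂ) • s

/-- The symplectic Ricci tensor `σ_{ij} = Σ_{k,m} ω^{km} R_{mjki}`. -/
def ric (l : ℕ) (R : Fin (2*l) → Fin (2*l) → Fin (2*l) → Fin (2*l) → ℝ)
    (i j : Fin (2*l)) : ℝ :=
  ∑ k, ∑ m, omUp l k m * R m j k i

/-- `σ̃_{ijkl}` built from a symmetric tensor `σ`. -/
def st (l : ℕ) (σ : Fin (2*l) → Fin (2*l) → ℝ) (i j k m : Fin (2*l)) : ℝ :=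
  (1/(2*((l : ℝ)+1))) * (om l i m * σ j k - om l i k * σ j m
    + om l j m * σ i k - om l j k * σ i m + 2 * σ i j * om l k m)

/-- The symplectic Weyl tensor `W = R − σ̃`. -/
def weyl (l : ℕ) (R : Fin (2*l) → Fin (2*l) → Fin (2*l) → Fin (2*l) → ℝ)
    (i j k m : Fin (2*l)) : ℝ :=
  R i j k m - st l (ric l R) i j k m

/-- Raising all four indices: `T^{ijkm} = Σ ω^{ia}ω^{jb}ω^{kc}ω^{md} T_{abcd}`. -/
def upT (l : ℕ) (T : Fin (2*l) → Fin (2*l) → Fin (2*l) → Fin (2*l) → ℝ)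
    (i j k m : Fin (2*l)) : ℝ :=
  ∑ a, ∑ b, ∑ c, ∑ d, omUp l i a * omUp l j b * omUp l k c * omUp l m d * T a b c d

/-- Raising both indices of a 2-tensor: `σ^{ij} = Σ ω^{ia}ω^{jb} σ_{ab}`. -/
def up2 (l : ℕ) (σ : Fin (2*l) → Fin (2*l) → ℝ) (i j : Fin (2*l)) : ℝ :=
  ∑ a, ∑ b, omUp l i a * omUp l j b * σ a b

/-- The spinor-valued 2-form `(𝕚/2) Σ T^{ij}_{kl} ε^k ∧ ε^l ⊗ e_{ij}·φ` built from a
4-tensor `T` (used for `R^S φ`, `σ^S φ` and `W^S φ`). -/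
def curvS (l : ℕ) (T : Fin (2*l) → Fin (2*l) → Fin (2*l) → Fin (2*l) → ℝ)
    (φ : Pol l) : Form l 2 :=
  (Complex.I/2) • ∑ i, ∑ j, ∑ k, ∑ m,
    w2 l (∑ a, ∑ b, omUp l i a * omUp l j b * T a b k m) k m (cliff l i (cliff l j φ))

/-- The spinor-valued 2-form `Σ_{i,j,k,d,m} T^{ijk}_d ε^m ∧ ε^d ⊗ e_{mkij}·φ`. -/
def mixS (l : ℕ) (T : Fin (2*l) → Fin (2*l) → Fin (2*l) → Fin (2*l) → ℝ)
    (φ : Pol l) : Form l 2 :=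
  ∑ i, ∑ j, ∑ k, ∑ d, ∑ m,
    w2 l (∑ a, ∑ b, ∑ c, omUp l i a * omUp l j b * omUp l k c * T a b c d) m d
      (cliff l m (cliff l k (cliff l i (cliff l j φ))))



section Aux

open Finset MvPolynomial

private lemma pderiv_comm' {n : ℕ} (i j : Fin n) (f : MvPolynomial (Fin n) ℂ) :
    pderiv i (pderiv j f) = pderiv j (pderiv i f) := by
  induction f using MvPolynomial.induction_on with
  | C a => simp
  | add f g hf hg => simp [hf, hg]
  | mul_X f k hf =>
      simp only [pderiv_mul, map_add, hf, pderiv_X, Pi.single_apply]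
      split_ifs <;> simp <;> ring

private lemma cliff_add (l : ℕ) (i : Fin (2*l)) (f g : Pol l) :
    cliff l i (f + g) = cliff l i f + cliff l i g := by
  unfold cliff; split <;> simp [mul_add, smul_add]

private lemma cliff_smul (l : ℕ) (i : Fin (2*l)) (c : ℂ) (f : Pol l) :
    cliff l i (c • f) = c • cliff l i f := by
  unfold cliff; split <;> simp [smul_comm c, mul_smul_comm]

private lemma cliff_zero (l : ℕ) (i : Fin (2*l)) : cliff l i 0 = 0 := by
  unfold cliff; split <;> simp

private lemma cliff_sum (l : ℕ) (i : Fin (2*l)) {α : Type*} (s : Finset α) (f : α → Pol l) :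
    cliff l i (∑ a ∈ s, f a) = ∑ a ∈ s, cliff l i (f a) := by
  classical
  induction s using Finset.induction_on with
  | empty => simp [cliff_zero]
  | insert _ _ h ih => simp [Finset.sum_insert h, cliff_add, ih]

private lemma cliff_comm (l : ℕ) (i j : Fin (2*l)) (f : Pol l) :
    cliff l i (cliff l j f) = cliff l j (cliff l i f) + (-(Complex.I) * ((om l i j : ℝ) : ℂ)) • f := by
  unfold cliff om
  have hi := i.isLt; have hj := j.isLt
  by_cases h1 : (i:ℕ) < l <;> by_cases h2 : (j:ℕ) < l <;>
    simp only [h1, h2, dite_true, dite_false, dif_pos, dif_neg, not_false_iff]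
  · rw [if_neg (by omega), if_neg (by omega)]
    simp only [Complex.ofReal_zero, mul_zero, zero_smul, add_zero, mul_smul_comm, smul_smul]
    rw [mul_left_comm]
  · by_cases h3 : (j:ℕ) = (i:ℕ) + l
    · rw [if_pos h3]
      have hidx : (⟨(j:ℕ) - l, by omega⟩ : Fin l) = ⟨(i:ℕ), h1⟩ := by
        apply Fin.ext; simp; omega
      rw [hidx]
      simp only [Derivation.map_smul, pderiv_mul, pderiv_X_self, one_mul, Complex.ofReal_one,
        mul_one, smul_add]
      module
    · rw [if_neg h3, if_neg (by omega)]
      simp only [Derivation.map_smul, pderiv_mul, smul_add, Complex.ofReal_zero, mul_zero,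
        zero_smul, add_zero]
      rw [pderiv_X_of_ne (by intro h; apply h3; rw [Fin.mk.injEq] at h; omega)]
      simp
  · by_cases h3 : (i:ℕ) = (j:ℕ) + l
    · rw [if_neg (by omega), if_pos h3]
      have hidx : (⟨(i:ℕ) - l, by omega⟩ : Fin l) = ⟨(j:ℕ), h2⟩ := by
        apply Fin.ext; simp; omega
      rw [hidx]
      simp only [Derivation.map_smul, pderiv_mul, pderiv_X_self, one_mul, smul_add,
        Complex.ofReal_neg, Complex.ofReal_one, mul_neg, mul_one, neg_neg]
      module
    · rw [if_neg (by omega), if_neg h3]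
      simp only [Derivation.map_smul, pderiv_mul, smul_add, Complex.ofReal_zero, mul_zero,
        zero_smul, add_zero]
      rw [pderiv_X_of_ne (by intro h; apply h3; rw [Fin.mk.injEq] at h; omega)]
      simp
  · rw [if_neg (by omega), if_neg (by omega)]
    simp only [Complex.ofReal_zero, mul_zero, zero_smul, add_zero]
    exact pderiv_comm' _ _ f

private lemma om_antisym (l : ℕ) (i j : Fin (2*l)) : om l i j = - om l j i := by
  have hi := i.isLt; have hj := j.isLt
  unfold om
  split_ifs <;> first | (exfalso; omega) | norm_num

private lemma omUp_antisym (l : ℕ) (i j : Fin (2*l)) : omUp l i j = - omUp l j i :=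
  om_antisym l i j

private lemma omUp_eq_om (l : ℕ) (i j : Fin (2*l)) : omUp l i j = om l i j := rfl

private def perm6 {ι : Type*} : (ι×ι×ι×ι×ι×ι) ≃ (ι×ι×ι×ι×ι×ι) where
  toFun := fun x => (x.2.2.2.2.2, x.2.2.2.1, x.2.2.2.2.1, x.2.2.1, x.1, x.2.1)
  invFun := fun x => (x.2.2.2.2.1, x.2.2.2.2.2, x.2.2.2.1, x.2.1, x.2.2.1, x.1)
  left_inv := fun ⟨_,_,_,_,_,_⟩ => rfl
  right_inv := fun ⟨_,_,_,_,_,_⟩ => rfl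

private lemma sum6_reorder {M : Type*} [AddCommMonoid M] {ι : Type*} [Fintype ι]
    (f : ι→ι→ι→ι→ι→ι→M) :
    (∑ c, ∑ d, ∑ a, ∑ b, ∑ i, ∑ j, f c d a b i j)
      = ∑ i, ∑ j, ∑ b, ∑ d, ∑ a, ∑ c, f c d a b i j := by
  have h := Equiv.sum_comp (perm6 (ι := ι))
    (fun x : ι×ι×ι×ι×ι×ι => f x.1 x.2.1 x.2.2.1 x.2.2.2.1 x.2.2.2.2.1 x.2.2.2.2.2)
  simp only [Fintype.sum_prod_type, perm6, Equiv.coe_fn_mk] at h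
  exact h.symm

private def perm4 {ι : Type*} : (ι×ι×ι×ι) ≃ (ι×ι×ι×ι) where
  toFun := fun x => (x.2.2.1, x.2.2.2, x.1, x.2.1)
  invFun := fun x => (x.2.2.1, x.2.2.2, x.1, x.2.1)
  left_inv := fun ⟨_,_,_,_⟩ => rfl
  right_inv := fun ⟨_,_,_,_⟩ => rfl

private lemma sum4_reorder {M : Type*} [AddCommMonoid M] {ι : Type*} [Fintype ι]
    (f : ι→ι→ι→ι→M) :
    (∑ a, ∑ b, ∑ c, ∑ d, f a b c d) = ∑ c, ∑ d, ∑ a, ∑ b, f a b c d := by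
  have h := Equiv.sum_comp (perm4 (ι := ι))
    (fun x : ι×ι×ι×ι => f x.1 x.2.1 x.2.2.1 x.2.2.2)
  simp only [Fintype.sum_prod_type, perm4, Equiv.coe_fn_mk] at h
  exact h.symm

private lemma delta2 {N : ℕ} (C : Fin N → Fin N → ℝ) (a c : Fin N) :
    ∑ k, ∑ m, C k m * ((Pi.single a 1 : Fin N → ℝ) k * (Pi.single c 1 : Fin N → ℝ) m
      - (Pi.single a 1 : Fin N → ℝ) m * (Pi.single c 1 : Fin N → ℝ) k) = C a c - C c a := by
  simp only [Pi.single_apply, mul_sub, Finset.sum_sub_distrib]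
  congr 1
  · simp [mul_ite, ite_mul, Finset.sum_ite_eq, Finset.sum_ite_eq']
  · simp [mul_ite, ite_mul, Finset.sum_ite_eq, Finset.sum_ite_eq']

private lemma Xop_zero (l r : ℕ) : Xop l r (0 : Form l r) = 0 := by
  funext v
  simp [Xop, cliffV, cliff_zero]

private lemma key_vanish (l : ℕ) (g : Pol l) (T : Fin (2*l) → Fin (2*l) → ℝ)
    (hT : ∀ b d, T b d = - T d b)
    (htr : ∑ b, ∑ d, T b d * om l b d = 0) :
    ∑ b, ∑ d, ((T b d : ℝ):ℂ) • cliff l d (cliff l b g) = 0 := by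
  set S : Pol l := ∑ b, ∑ d, ((T b d : ℝ):ℂ) • cliff l d (cliff l b g) with hS
  have hself : S = -S + (∑ b, ∑ d, (((T b d : ℝ):ℂ) * (-(Complex.I) * ((om l d b : ℝ):ℂ))) • g) := by
    calc S = ∑ b, ∑ d, (((T b d : ℝ):ℂ) • cliff l b (cliff l d g)
              + (((T b d : ℝ):ℂ) * (-(Complex.I) * ((om l d b : ℝ):ℂ))) • g) := by
          rw [hS]
          refine Finset.sum_congr rfl fun b _ => Finset.sum_congr rfl fun d _ => ?_
          rw [cliff_comm l d b g, smul_add, smul_smul]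
      _ = (∑ b, ∑ d, ((T b d : ℝ):ℂ) • cliff l b (cliff l d g))
            + ∑ b, ∑ d, (((T b d : ℝ):ℂ) * (-(Complex.I) * ((om l d b : ℝ):ℂ))) • g := by
          simp only [Finset.sum_add_distrib]
      _ = -S + ∑ b, ∑ d, (((T b d : ℝ):ℂ) * (-(Complex.I) * ((om l d b : ℝ):ℂ))) • g := by
          congr 1
          calc (∑ b, ∑ d, ((T b d : ℝ):ℂ) • cliff l b (cliff l d g))
              = ∑ d, ∑ b, ((T b d : ℝ):ℂ) • cliff l b (cliff l d g) := Finset.sum_comm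
            _ = ∑ b, ∑ d, -(((T b d : ℝ):ℂ) • cliff l d (cliff l b g)) := by
                refine Finset.sum_congr rfl fun b _ => Finset.sum_congr rfl fun d _ => ?_
                rw [hT d b]; push_cast; rw [neg_smul]
            _ = -S := by rw [hS]; simp [Finset.sum_neg_distrib]
  have hsc : (∑ b, ∑ d, (((T b d : ℝ):ℂ) * (-(Complex.I) * ((om l d b : ℝ):ℂ)))) = 0 := by
    have hpt : ∀ b d : Fin (2*l), ((T b d : ℝ):ℂ) * (-(Complex.I) * ((om l d b : ℝ):ℂ))
        = Complex.I * ((T b d * om l b d : ℝ):ℂ) := by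
      intro b d; rw [om_antisym l d b]; push_cast; ring
    simp only [hpt, ← Finset.mul_sum]
    have h2 : (∑ b, ∑ d, ((T b d * om l b d : ℝ):ℂ))
        = ((∑ b, ∑ d, T b d * om l b d : ℝ) : ℂ) := by push_cast; ring
    rw [h2, htr]; simp
  have hB : (∑ b, ∑ d, (((T b d : ℝ):ℂ) * (-(Complex.I) * ((om l d b : ℝ):ℂ))) • g) = 0 := by
    simp only [← Finset.sum_smul]
    rw [hsc, zero_smul]
  have h4 : S = -S := by
    conv_lhs => rw [hself]
    rw [hB, add_zero]
  have h5 : (2:ℂ) • S = 0 := by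
    rw [two_smul]
    nth_rewrite 1 [h4]
    simp
  rcases smul_eq_zero.mp h5 with h | h
  · exact absurd h (by norm_num)
  · exact h

end Aux

/-- `Y²(W^S φ) = 0` and consequently `q^{20}(W^S φ) = 0`. -/
theorem stmt_12 (l : ℕ) (hl : 2 ≤ l) (W : Fin (2*l) → Fin (2*l) → Fin (2*l) → Fin (2*l) → ℝ)
    (hW1 : ∀ i j k m, W i j k m = W j i k m)
    (hW2 : ∀ i j k m, W i j k m = - W i j m k)
    (hW3 : ∀ i j k m, W i j k m + W i k m j + W i m j k = 0)
    (hW4 : ∀ i j k m, W i j k m + W j k m i + W k m i j + W m i j k = 0)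
    (hW5 : ∀ k m, ∑ i, ∑ j, upT l W i j k m * om l i j = 0)
    (hW6 : ∀ j m, ∑ i, ∑ k, upT l W i j k m * om l i k = 0)
    (hW7 : ∀ j k, ∑ i, ∑ m, upT l W i j k m * om l i m = 0)
    (hW8 : ∀ i m, ∑ j, ∑ k, upT l W i j k m * om l j k = 0)
    (hW9 : ∀ i k, ∑ j, ∑ m, upT l W i j k m * om l j m = 0)
    (hW10 : ∀ i j, ∑ k, ∑ m, upT l W i j k m * om l k m = 0)
    (φ : Pol l) :
    Yop l 0 (Yop l 1 (curvS l W φ)) = 0 ∧ q20 l (curvS l W φ) = 0 := by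
  classical
  have hcons1 : ∀ (x : Fin (2*l) → ℝ) (y : Fin 1 → Fin (2*l) → ℝ),
      (Fin.cons x y : Fin 2 → Fin (2*l) → ℝ) 1 = y 0 := fun _ _ => rfl
  have hcurv : ∀ (a c : Fin (2*l)) (v : Fin 0 → Fin (2*l) → ℝ),
      curvS l W φ (Fin.cons (basisVec l a) (Fin.cons (basisVec l c) v))
      = ∑ i, ∑ j, ((Complex.I/2) * ((((∑ p, ∑ q, omUp l i p * omUp l j q * W p q a c)
          - ∑ p, ∑ q, omUp l i p * omUp l j q * W p q c a : ℝ)):ℂ))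
          • cliff l i (cliff l j φ) := by
    intro a c v
    unfold curvS w2 basisVec
    simp only [Pi.smul_apply, Finset.sum_apply, Fin.cons_zero, hcons1]
    have hin : ∀ i j : Fin (2*l),
        (∑ k, ∑ m, (((∑ p, ∑ q, omUp l i p * omUp l j q * W p q k m)
            * ((Pi.single a 1 : Fin (2*l) → ℝ) k * (Pi.single c 1 : Fin (2*l) → ℝ) m
              - (Pi.single a 1 : Fin (2*l) → ℝ) m * (Pi.single c 1 : Fin (2*l) → ℝ) k) : ℝ):ℂ)
          • cliff l i (cliff l j φ))
        = ((((∑ p, ∑ q, omUp l i p * omUp l j q * W p q a c)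
            - ∑ p, ∑ q, omUp l i p * omUp l j q * W p q c a : ℝ)):ℂ)
          • cliff l i (cliff l j φ) := by
      intro i j
      simp only [← Finset.sum_smul]
      congr 1
      push_cast
      exact_mod_cast congrArg (fun r : ℝ => ((r:ℝ):ℂ))
        (delta2 (fun k m => ∑ p, ∑ q, omUp l i p * omUp l j q * W p q k m) a c)
    simp only [hin, Finset.smul_sum, smul_smul]
  -- antisymmetry of upT in the last two indices
  have hanti : ∀ i j b d : Fin (2*l), upT l W i j b d = - upT l W i j d b := by
    intro i j b d
    have swap : upT l W i j d b = ∑ a, ∑ p, ∑ c, ∑ dd,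
        omUp l i a * omUp l j p * omUp l d dd * omUp l b c * W a p dd c := by
      unfold upT
      exact Finset.sum_congr rfl fun a _ => Finset.sum_congr rfl fun p _ => Finset.sum_comm
    rw [swap]
    unfold upT
    simp only [← Finset.sum_neg_distrib]
    refine Finset.sum_congr rfl fun a _ => Finset.sum_congr rfl fun p _ =>
      Finset.sum_congr rfl fun c _ => Finset.sum_congr rfl fun dd _ => ?_
    rw [hW2 a p c dd]; ring
  have hY : Yop l 0 (Yop l 1 (curvS l W φ)) = 0 := by
    funext v
    have step1 : Yop l 0 (Yop l 1 (curvS l W φ)) v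
        = ∑ c, ∑ d, ∑ a, ∑ b, ∑ i, ∑ j,
            (((omUp l c d:ℝ):ℂ) * (((omUp l a b:ℝ):ℂ)
              * ((Complex.I/2) * ((((∑ p, ∑ q, omUp l i p * omUp l j q * W p q a c)
                - ∑ p, ∑ q, omUp l i p * omUp l j q * W p q c a : ℝ)):ℂ))))
            • cliff l d (cliff l b (cliff l i (cliff l j φ))) := by
      simp only [Yop, hcurv, cliff_sum, cliff_smul, Finset.smul_sum, smul_smul]
    rw [step1, sum6_reorder]
    simp only [Pi.zero_apply]
    refine Finset.sum_eq_zero fun i _ => Finset.sum_eq_zero fun j _ => ?_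
    have hC : ∀ a c : Fin (2*l), (∑ p, ∑ q, omUp l i p * omUp l j q * W p q c a)
        = -∑ p, ∑ q, omUp l i p * omUp l j q * W p q a c := by
      intro a c
      simp only [← Finset.sum_neg_distrib]
      refine Finset.sum_congr rfl fun p _ => Finset.sum_congr rfl fun q _ => ?_
      rw [hW2 p q a c]; ring
    have hreal : ∀ b d : Fin (2*l), (∑ a, ∑ c, omUp l c d * (omUp l a b
        * ∑ p, ∑ q, omUp l i p * omUp l j q * W p q a c)) = upT l W i j b d := by
      intro b d
      unfold upT
      simp only [Finset.mul_sum]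
      rw [sum4_reorder]
      refine Finset.sum_congr rfl fun p _ => Finset.sum_congr rfl fun q _ =>
        Finset.sum_congr rfl fun a _ => Finset.sum_congr rfl fun c _ => ?_
      rw [omUp_antisym l c d, omUp_antisym l a b]
      ring
    have hcoef : ∀ b d : Fin (2*l), (∑ a, ∑ c, (((omUp l c d:ℝ):ℂ) * (((omUp l a b:ℝ):ℂ)
        * ((Complex.I/2) * ((((∑ p, ∑ q, omUp l i p * omUp l j q * W p q a c)
          - ∑ p, ∑ q, omUp l i p * omUp l j q * W p q c a : ℝ)):ℂ)))))
        = Complex.I * ((upT l W i j b d : ℝ):ℂ) := by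
      intro b d
      have hpt : ∀ a c : Fin (2*l), (((omUp l c d:ℝ):ℂ) * (((omUp l a b:ℝ):ℂ)
          * ((Complex.I/2) * ((((∑ p, ∑ q, omUp l i p * omUp l j q * W p q a c)
            - ∑ p, ∑ q, omUp l i p * omUp l j q * W p q c a : ℝ)):ℂ))))
          = Complex.I * ((omUp l c d * (omUp l a b
              * ∑ p, ∑ q, omUp l i p * omUp l j q * W p q a c) : ℝ):ℂ) := by
        intro a c
        rw [hC a c]
        push_cast
        ring
      simp only [hpt, ← Finset.mul_sum]
      congr 1
      rw [← hreal b d]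
      push_cast
      ring
    calc (∑ b, ∑ d, ∑ a, ∑ c,
            (((omUp l c d:ℝ):ℂ) * (((omUp l a b:ℝ):ℂ)
              * ((Complex.I/2) * ((((∑ p, ∑ q, omUp l i p * omUp l j q * W p q a c)
                - ∑ p, ∑ q, omUp l i p * omUp l j q * W p q c a : ℝ)):ℂ))))
            • cliff l d (cliff l b (cliff l i (cliff l j φ))))
        = ∑ b, ∑ d, (Complex.I * ((upT l W i j b d : ℝ):ℂ))
            • cliff l d (cliff l b (cliff l i (cliff l j φ))) := by
          refine Finset.sum_congr rfl fun b _ => Finset.sum_congr rfl fun d _ => ?_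
          simp only [← Finset.sum_smul]
          rw [hcoef b d]
      _ = Complex.I • ∑ b, ∑ d, ((upT l W i j b d : ℝ):ℂ)
            • cliff l d (cliff l b (cliff l i (cliff l j φ))) := by
          simp only [mul_smul, ← Finset.smul_sum]
      _ = 0 := by
          rw [key_vanish l (cliff l i (cliff l j φ)) (fun b d => upT l W i j b d)
            (fun b d => hanti i j b d) (hW10 i j), smul_zero]
  refine ⟨hY, ?_⟩
  unfold q20 XXYY
  rw [hY, Xop_zero, Xop_zero]
  funext v
  simp

end
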